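/- If p is an L-Lipschitz probability density on [0,1)^d, and q is the piecewise-constant (normalized) histogram density obtained by setting the value on each of the b^d axis-aligned cubes of side 1/b equal to the value of p at the cube's centroid and then normalizing, then ‖p − q‖₁ ≤ √d · L / b (provided the normalization constant is nonzero). -/

import Mathlib

open MeasureTheory

/-- The half-open unit cube `[0,1)^d`. -/
def cube (d : ℕ) : Set (Fin d → ℝ) := {x | ∀ i, x i ∈ Set.Ico (0 : ℝ) 1}

/-- The centroid of the axis-aligned bin of side `1/b` containing `x`. -/
noncomputable def binCentroid (d b : ℕ) (x : Fin d → ℝ) : Fin d → ℝ :=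
  fun i => ((⌊(b : ℝ) * x i⌋ : ℝ) + 1 / 2) / b

private theorem measurable_int_cast_aux : Measurable (fun n : ℤ => (n : ℝ)) :=
  measurable_from_top

theorem stmt17 (d b : ℕ) (hb : 1 ≤ b) (L : ℝ) (hL : 0 ≤ L)
    (p : (Fin d → ℝ) → ℝ)
    (hpos : ∀ x ∈ cube d, 0 ≤ p x)
    (hint : ∫ x in cube d, p x = 1)
    (hlip : ∀ x ∈ cube d, ∀ y ∈ cube d,
      |p x - p y| ≤ L * Real.sqrt (∑ i, (x i - y i) ^ 2))
    (Z : ℝ) (hZ : Z = ∫ x in cube d, p (binCentroid d b x)) (hZ0 : Z ≠ 0) :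
    ∫ x in cube d, |p x - p (binCentroid d b x) / Z| ≤ Real.sqrt d * L / b := by
  have hbR : (0 : ℝ) < b := by exact_mod_cast hb
  -- cube basics
  have hcube_eq : cube d = Set.pi Set.univ (fun _ => Set.Ico (0:ℝ) 1) := by
    ext x; simp [cube, Set.mem_pi]
  have hmeas : MeasurableSet (cube d) := by
    rw [hcube_eq]; exact MeasurableSet.univ_pi fun _ => measurableSet_Ico
  have hvol : volume (cube d) = 1 := by
    rw [hcube_eq, volume_pi_pi]; simp
  -- centroid lands in cube
  have hc_mem : ∀ x ∈ cube d, binCentroid d b x ∈ cube d := by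
    intro x hx i
    have hxi := hx i
    have h0 : (0:ℝ) ≤ (b:ℝ) * x i := mul_nonneg hbR.le hxi.1
    have h1 : (b:ℝ) * x i < b := by
      have := hxi.2
      calc (b:ℝ) * x i < (b:ℝ) * 1 := by
            exact mul_lt_mul_of_pos_left this hbR
        _ = b := by ring
    have hf0 : (0:ℝ) ≤ (⌊(b:ℝ) * x i⌋ : ℝ) := by
      exact_mod_cast Int.floor_nonneg.2 h0
    have hf1 : (⌊(b:ℝ) * x i⌋ : ℝ) ≤ (b:ℝ) - 1 := by
      have : ⌊(b:ℝ) * x i⌋ ≤ (b:ℤ) - 1 := by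
        have : ⌊(b:ℝ) * x i⌋ < (b:ℤ) := by
          rw [Int.floor_lt]; push_cast; exact h1
        omega
      calc (⌊(b:ℝ) * x i⌋ : ℝ) ≤ ((b:ℤ) - 1 : ℤ) := by exact_mod_cast this
        _ = (b:ℝ) - 1 := by push_cast; ring
    constructor
    · unfold binCentroid
      positivity
    · unfold binCentroid
      rw [div_lt_one hbR]
      nlinarith
  -- distance bound
  have hc_dist : ∀ x : Fin d → ℝ,
      Real.sqrt (∑ i, (x i - binCentroid d b x i) ^ 2) ≤ Real.sqrt d / (2 * b) := by
    intro x
    have hsum : ∑ i, (x i - binCentroid d b x i) ^ 2 ≤ (d : ℝ) * (1 / (2 * (b:ℝ))) ^ 2 := by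
      have key : ∀ i : Fin d, (x i - binCentroid d b x i) ^ 2 ≤ (1 / (2 * (b:ℝ))) ^ 2 := by
        intro i
        have hfr0 : (0:ℝ) ≤ (b:ℝ) * x i - ⌊(b:ℝ) * x i⌋ := by
          have := Int.floor_le ((b:ℝ) * x i); linarith
        have hfr1 : (b:ℝ) * x i - ⌊(b:ℝ) * x i⌋ < 1 := by
          have := Int.lt_floor_add_one ((b:ℝ) * x i); linarith
        have hrepr : x i - binCentroid d b x i
            = ((b:ℝ) * x i - (⌊(b:ℝ) * x i⌋ : ℝ) - 1/2) / b := by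
          unfold binCentroid
          rw [eq_div_iff hbR.ne', sub_mul, div_mul_cancel₀ _ hbR.ne']
          ring
        have h1 : |x i - binCentroid d b x i| ≤ 1 / (2 * (b:ℝ)) := by
          rw [hrepr, abs_div, abs_of_pos hbR]
          have hnum : |(b:ℝ) * x i - (⌊(b:ℝ) * x i⌋ : ℝ) - 1/2| ≤ 1/2 :=
            abs_le.2 ⟨by linarith, by linarith⟩
          calc |(b:ℝ) * x i - (⌊(b:ℝ) * x i⌋ : ℝ) - 1/2| / b ≤ (1/2) / b := by
                gcongr
            _ = 1 / (2 * (b:ℝ)) := by ring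
        calc (x i - binCentroid d b x i) ^ 2 = |x i - binCentroid d b x i| ^ 2 := by
              rw [sq_abs]
          _ ≤ (1 / (2 * (b:ℝ))) ^ 2 := by
              exact pow_le_pow_left₀ (abs_nonneg _) h1 2
      calc ∑ i, (x i - binCentroid d b x i) ^ 2
          ≤ ∑ _i : Fin d, (1 / (2 * (b:ℝ))) ^ 2 := Finset.sum_le_sum fun i _ => key i
        _ = (d : ℝ) * (1 / (2 * (b:ℝ))) ^ 2 := by
            rw [Finset.sum_const, Finset.card_fin, nsmul_eq_mul]
    calc Real.sqrt (∑ i, (x i - binCentroid d b x i) ^ 2)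
        ≤ Real.sqrt ((d : ℝ) * (1 / (2 * (b:ℝ))) ^ 2) := Real.sqrt_le_sqrt hsum
      _ = Real.sqrt d * (1 / (2 * (b:ℝ))) := by
          rw [Real.sqrt_mul (Nat.cast_nonneg d), Real.sqrt_sq (by positivity)]
      _ = Real.sqrt d / (2 * b) := by ring
  -- Lipschitz extension of p
  have hlipOn : LipschitzOnWith (Real.toNNReal (L * Real.sqrt d)) p (cube d) := by
    apply LipschitzOnWith.of_dist_le_mul
    intro x hx y hy
    have h1 : Real.sqrt (∑ i, (x i - y i) ^ 2) ≤ Real.sqrt d * dist x y := by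
      have hsum : ∑ i, (x i - y i) ^ 2 ≤ (d : ℝ) * (dist x y) ^ 2 := by
        have : ∀ i : Fin d, (x i - y i) ^ 2 ≤ (dist x y) ^ 2 := by
          intro i
          have := dist_le_pi_dist x y i
          have h2 : |x i - y i| ≤ dist x y := by rwa [Real.dist_eq] at this
          calc (x i - y i) ^ 2 = |x i - y i| ^ 2 := (sq_abs _).symm
            _ ≤ (dist x y) ^ 2 := pow_le_pow_left₀ (abs_nonneg _) h2 2
        calc ∑ i, (x i - y i) ^ 2 ≤ ∑ _i : Fin d, (dist x y) ^ 2 :=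
              Finset.sum_le_sum fun i _ => this i
          _ = (d : ℝ) * (dist x y) ^ 2 := by simp [mul_comm]
      calc Real.sqrt (∑ i, (x i - y i) ^ 2) ≤ Real.sqrt ((d:ℝ) * dist x y ^ 2) :=
            Real.sqrt_le_sqrt hsum
        _ = Real.sqrt d * dist x y := by
            rw [Real.sqrt_mul (Nat.cast_nonneg d), Real.sqrt_sq dist_nonneg]
    calc dist (p x) (p y) = |p x - p y| := Real.dist_eq _ _
      _ ≤ L * Real.sqrt (∑ i, (x i - y i) ^ 2) := hlip x hx y hy
      _ ≤ L * (Real.sqrt d * dist x y) := by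
          apply mul_le_mul_of_nonneg_left h1 hL
      _ = (Real.toNNReal (L * Real.sqrt d) : ℝ) * dist x y := by
          rw [Real.coe_toNNReal _ (by positivity)]; ring
  obtain ⟨q, hqlip, hqeq⟩ := hlipOn.extend_real
  have hqc : Continuous q := hqlip.continuous
  -- measurability of binCentroid
  have hcmeas : Measurable (binCentroid d b) := by
    apply measurable_pi_lambda
    intro i
    unfold binCentroid
    have h1 : Measurable fun x : Fin d → ℝ => (⌊(b:ℝ) * x i⌋ : ℝ) :=
      measurable_int_cast_aux.comp ((measurable_pi_apply i).const_mul _).floor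
    exact (h1.add_const (1/2)).div_const _
  -- compact superset
  have hsub : cube d ⊆ Set.pi Set.univ (fun _ => Set.Icc (0:ℝ) 1) := by
    rw [hcube_eq]; exact Set.pi_mono fun i _ => Set.Ico_subset_Icc_self
  have hcomp : IsCompact (Set.pi Set.univ (fun _ : Fin d => Set.Icc (0:ℝ) 1)) :=
    isCompact_univ_pi fun _ => isCompact_Icc
  obtain ⟨M, hM⟩ := hcomp.exists_bound_of_continuousOn hqc.continuousOn
  -- integrabilities
  have hfin : volume (cube d) < ⊤ := by rw [hvol]; exact ENNReal.one_lt_top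
  have hint_q : IntegrableOn q (cube d) :=
    ((hqc.continuousOn.integrableOn_compact hcomp)).mono_set hsub
  have hint_qc : IntegrableOn (fun x => q (binCentroid d b x)) (cube d) := by
    apply Integrable.mono' (integrableOn_const hfin.ne (by simp) : IntegrableOn (fun _ => M) (cube d) volume)
      ((hqc.measurable.comp hcmeas).aestronglyMeasurable)
    rw [ae_restrict_iff' hmeas]
    filter_upwards with x hx
    exact hM _ (hsub (hc_mem x hx))
  -- replace p by q in all integrals
  have hcongr1 : ∫ x in cube d, p x = ∫ x in cube d, q x :=
    setIntegral_congr_fun hmeas hqeq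
  have hcongr2 : ∫ x in cube d, p (binCentroid d b x) = ∫ x in cube d, q (binCentroid d b x) :=
    setIntegral_congr_fun hmeas fun x hx => hqeq (hc_mem x hx)
  have hZq : Z = ∫ x in cube d, q (binCentroid d b x) := by rw [hZ, hcongr2]
  have hZpos : 0 < Z := by
    rcases lt_or_ge 0 Z with h | h
    · exact h
    exfalso; apply hZ0
    apply le_antisymm h
    rw [hZq]
    apply setIntegral_nonneg hmeas
    intro x hx
    rw [← hqeq (hc_mem x hx)]
    exact hpos _ (hc_mem x hx)
  have hcongr3 : ∫ x in cube d, |p x - p (binCentroid d b x) / Z|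
      = ∫ x in cube d, |q x - q (binCentroid d b x) / Z| := by
    apply setIntegral_congr_fun hmeas
    intro x hx
    show |p x - p (binCentroid d b x) / Z| = |q x - q (binCentroid d b x) / Z|
    rw [hqeq hx, hqeq (hc_mem x hx)]
  rw [hcongr3]
  -- key pointwise bounds
  have hkey : ∀ x ∈ cube d, |q x - q (binCentroid d b x)| ≤ L * Real.sqrt d / (2 * b) := by
    intro x hx
    rw [← hqeq hx, ← hqeq (hc_mem x hx)]
    calc |p x - p (binCentroid d b x)|
        ≤ L * Real.sqrt (∑ i, (x i - binCentroid d b x i) ^ 2) :=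
          hlip x hx _ (hc_mem x hx)
      _ ≤ L * (Real.sqrt d / (2 * b)) := mul_le_mul_of_nonneg_left (hc_dist x) hL
      _ = L * Real.sqrt d / (2 * b) := by ring
  have hqc_nonneg : ∀ x ∈ cube d, 0 ≤ q (binCentroid d b x) := by
    intro x hx
    rw [← hqeq (hc_mem x hx)]; exact hpos _ (hc_mem x hx)
  -- integrabilities of compound functions
  have hint_diff : IntegrableOn (fun x => |q x - q (binCentroid d b x)|) (cube d) :=
    (hint_q.sub hint_qc).abs
  have hint_main : IntegrableOn (fun x => |q x - q (binCentroid d b x) / Z|) (cube d) :=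
    (hint_q.sub (hint_qc.div_const Z)).abs
  have hint_rhs : IntegrableOn
      (fun x => |q x - q (binCentroid d b x)| + q (binCentroid d b x) * |1 - 1/Z|) (cube d) :=
    hint_diff.add (hint_qc.mul_const _)
  -- bound on ∫ |q - q∘c|
  have hdiff_bound : ∫ x in cube d, |q x - q (binCentroid d b x)| ≤ L * Real.sqrt d / (2 * b) := by
    calc ∫ x in cube d, |q x - q (binCentroid d b x)|
        ≤ ∫ _x in cube d, L * Real.sqrt d / (2 * b) :=
          setIntegral_mono_on hint_diff (integrableOn_const hfin.ne (by simp)) hmeas hkey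
      _ = L * Real.sqrt d / (2 * b) := by
          rw [setIntegral_const, measureReal_def, hvol]; simp
  -- bound on |Z - 1|
  have hZ1 : |Z - 1| ≤ L * Real.sqrt d / (2 * b) := by
    have : Z - 1 = ∫ x in cube d, (q (binCentroid d b x) - q x) := by
      rw [integral_sub hint_qc hint_q, ← hcongr1, hint, hZq]
    calc |Z - 1| = |∫ x in cube d, (q (binCentroid d b x) - q x)| := by rw [this]
      _ ≤ ∫ x in cube d, |q (binCentroid d b x) - q x| := by
          simpa [Real.norm_eq_abs] using
            norm_integral_le_integral_norm (μ := volume.restrict (cube d))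
              (fun x => q (binCentroid d b x) - q x)
      _ = ∫ x in cube d, |q x - q (binCentroid d b x)| := by
          congr 1; funext x; rw [abs_sub_comm]
      _ ≤ L * Real.sqrt d / (2 * b) := hdiff_bound
  -- main estimate
  have hmain : ∫ x in cube d, |q x - q (binCentroid d b x) / Z|
      ≤ ∫ x in cube d, (|q x - q (binCentroid d b x)| + q (binCentroid d b x) * |1 - 1/Z|) := by
    apply setIntegral_mono_on hint_main hint_rhs hmeas
    intro x hx
    have h1 : |q x - q (binCentroid d b x) / Z|
        ≤ |q x - q (binCentroid d b x)| + |q (binCentroid d b x) - q (binCentroid d b x) / Z| :=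
      abs_sub_le _ _ _
    have h2 : |q (binCentroid d b x) - q (binCentroid d b x) / Z|
        = q (binCentroid d b x) * |1 - 1/Z| := by
      have hr : q (binCentroid d b x) - q (binCentroid d b x) / Z
          = q (binCentroid d b x) * (1 - 1/Z) := by ring
      rw [hr, abs_mul, abs_of_nonneg (hqc_nonneg x hx)]
    linarith
  have hsplit : ∫ x in cube d, (|q x - q (binCentroid d b x)| + q (binCentroid d b x) * |1 - 1/Z|)
      = (∫ x in cube d, |q x - q (binCentroid d b x)|) + |1 - 1/Z| * Z := by
    rw [integral_add hint_diff (hint_qc.mul_const _), integral_mul_const, hZq]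
    ring
  have habsZ : |1 - 1/Z| * Z = |Z - 1| := by
    have hr : (1 - 1/Z) * Z = Z - 1 := by field_simp
    rw [← hr, abs_mul, abs_of_pos hZpos]
  calc ∫ x in cube d, |q x - q (binCentroid d b x) / Z|
      ≤ (∫ x in cube d, |q x - q (binCentroid d b x)|) + |1 - 1/Z| * Z := by
        rw [← hsplit]; exact hmain
    _ ≤ L * Real.sqrt d / (2 * b) + L * Real.sqrt d / (2 * b) := by
        rw [habsZ]; exact add_le_add hdiff_bound hZ1
    _ = Real.sqrt d * L / b := by field_simp; ring
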